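/- Let X be a real vector space, Q ⊆ X a convex set, and F a subset with ∅ ≠ F and F ≠ Q. Then F is a face of Q if and only if there exists a compatible total preorder ⪯ on X such that F = Min(Q | ⪯) := {x ∈ Q : x ⪯ y for all y ∈ Q}. -/

import Mathlib

/-- `F` is a face of the convex set `Q`: a nonempty convex subset of `Q` such that whenever
a point `α • u + (1 - α) • v` with `u, v ∈ Q`, `0 < α < 1` lies in `F`, both `u, v ∈ F`. -/
def IsFace {X : Type*} [AddCommGroup X] [Module ℝ X] (Q F : Set X) : Prop :=
  F.Nonempty ∧ Convex ℝ F ∧ F ⊆ Q ∧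
    ∀ u v : X, u ∈ Q → v ∈ Q → ∀ α : ℝ, 0 < α → α < 1 →
      α • u + (1 - α) • v ∈ F → u ∈ F ∧ v ∈ F

/-- `r` is a total preorder on `X` compatible with the vector space operations:
reflexive, transitive, total, translation invariant and invariant under
multiplication by positive scalars. -/
def IsCompatTotalPreorder {X : Type*} [AddCommGroup X] [Module ℝ X]
    (r : X → X → Prop) : Prop :=
  (∀ x, r x x) ∧ (∀ x y z, r x y → r y z → r x z) ∧
    (∀ x y, r x y ∨ r y x) ∧
    (∀ x y z, r x y → r (x + z) (y + z)) ∧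
    (∀ (x y : X) (l : ℝ), 0 < l → r x y → r (l • x) (l • y))

/-- Algebra: combining two scaled differences. -/
lemma comb_diff {X : Type*} [AddCommGroup X] [Module ℝ X] {l m : ℝ}
    (hl : 0 < l) (hm : 0 < m) (a b c d : X) :
    l • (a - b) + m • (c - d) =
      (l + m) • (((l/(l+m)) • a + (m/(l+m)) • c) - ((l/(l+m)) • b + (m/(l+m)) • d)) := by
  have h : l + m ≠ 0 := by positivity
  match_scalars <;> field_simp <;> ring

/-- Auxiliary lemma for the "minimizer set is a face" direction. -/
lemma min_face_aux {X : Type*} [AddCommGroup X] [Module ℝ X] {Q : Set X}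
    {r : X → X → Prop}
    (htrans : ∀ x y z, r x y → r y z → r x z)
    (hadd : ∀ x y z, r x y → r (x + z) (y + z))
    (hsmul : ∀ (x y : X) (l : ℝ), 0 < l → r x y → r (l • x) (l • y))
    {u v : X} (hu : u ∈ Q) (hv : v ∈ Q) {α : ℝ} (h0 : 0 < α) (h1 : α < 1)
    (hw : α • u + (1 - α) • v ∈ {x ∈ Q | ∀ y ∈ Q, r x y}) (huv : r u v) :
    u ∈ {x ∈ Q | ∀ y ∈ Q, r x y} ∧ v ∈ {x ∈ Q | ∀ y ∈ Q, r x y} := by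
  obtain ⟨hwQ, hwmin⟩ := hw
  have h1' : (0:ℝ) < 1 - α := by linarith
  have huw : r u (α • u + (1 - α) • v) := by
    have h2 : r ((1-α) • u) ((1-α) • v) := hsmul _ _ _ h1' huv
    have h3 := hadd _ _ (α • u) h2
    have e1 : (1-α) • u + α • u = u := by module
    have e2 : (1-α) • v + α • u = α • u + (1 - α) • v := by module
    rwa [e1, e2] at h3
  have hvw : r v (α • u + (1 - α) • v) := by
    have hwu : r (α • u + (1 - α) • v) u := hwmin u hu
    have h4 : r (α • (α • u + (1 - α) • v)) (α • u) := hsmul _ _ α h0 hwu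
    have h5 := hadd _ _ ((1-α) • (α • u + (1 - α) • v)) h4
    have e1 : α • (α • u + (1 - α) • v) + (1-α) • (α • u + (1 - α) • v)
        = α • u + (1 - α) • v := by module
    rw [e1] at h5
    have h7 := hadd _ _ (-(α • u)) h5
    have e3 : (α • u + (1 - α) • v) + -(α • u) = (1-α) • v := by module
    have e4 : (α • u + (1-α) • (α • u + (1 - α) • v)) + -(α • u)
        = (1-α) • (α • u + (1 - α) • v) := by module
    rw [e3, e4] at h7
    have h9 := hsmul _ _ ((1-α)⁻¹) (by positivity) h7
    have hne : (1 - α) ≠ 0 := ne_of_gt h1'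
    rwa [smul_smul, smul_smul, inv_mul_cancel₀ hne, one_smul, one_smul] at h9
  exact ⟨⟨hu, fun y hy => htrans _ _ _ huw (hwmin y hy)⟩,
    ⟨hv, fun y hy => htrans _ _ _ hvw (hwmin y hy)⟩⟩

theorem face_iff_compatTotalPreorder {X : Type*} [AddCommGroup X] [Module ℝ X]
    (Q F : Set X) (hQ : Convex ℝ Q) (hne : F.Nonempty) (hFQ : F ≠ Q) :
    IsFace Q F ↔
      ∃ r : X → X → Prop, IsCompatTotalPreorder r ∧
        F = {x ∈ Q | ∀ y ∈ Q, r x y} := by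
  obtain ⟨f0, hf0⟩ := hne
  constructor
  · rintro ⟨-, hFc, hFsub, hface⟩
    -- the forbidden cone T
    set T : Set X := {x | ∃ l : ℝ, 0 < l ∧ ∃ f ∈ F, ∃ q ∈ Q, q ∉ F ∧ x = l • (f - q)} with hT
    -- basic combination facts
    have hcomb : ∀ l m : ℝ, 0 < l → 0 < m →
        (0 < l/(l+m) ∧ l/(l+m) < 1 ∧ (1 : ℝ) - l/(l+m) = m/(l+m)) := by
      intro l m hl hm
      have hs : 0 < l + m := by linarith
      refine ⟨by positivity, ?_, ?_⟩
      · rw [div_lt_one hs]; linarith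
      · field_simp; ring
    have hT_smul : ∀ l : ℝ, 0 < l → ∀ x ∈ T, l • x ∈ T := by
      rintro l hl x ⟨m, hm, f, hf, q, hq, hqF, rfl⟩
      exact ⟨l * m, by positivity, f, hf, q, hq, hqF, by rw [smul_smul]⟩
    have hT_add : ∀ x ∈ T, ∀ y ∈ T, x + y ∈ T := by
      rintro x ⟨l, hl, f, hf, q, hq, hqF, rfl⟩ y ⟨m, hm, f', hf', q', hq', hqF', rfl⟩
      obtain ⟨ha0, ha1, hab⟩ := hcomb l m hl hm
      refine ⟨l + m, by positivity, (l/(l+m)) • f + (m/(l+m)) • f',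
        hFc hf hf' (le_of_lt ha0) (by rw [← hab]; linarith) (by rw [← hab]; ring),
        (l/(l+m)) • q + (m/(l+m)) • q',
        hQ hq hq' (le_of_lt ha0) (by rw [← hab]; linarith) (by rw [← hab]; ring), ?_,
        comb_diff hl hm f q f' q'⟩
      intro hmem
      rw [← hab] at hmem
      exact hqF (hface q q' hq hq' _ ha0 ha1 hmem).1
    -- the family of cones
    set S : Set (Set X) := {P | 0 ∈ P ∧ (∀ a ∈ P, ∀ b ∈ P, a + b ∈ P) ∧
        (∀ l : ℝ, 0 < l → ∀ a ∈ P, l • a ∈ P) ∧ (∀ x ∈ P, x ∉ T) ∧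
        (∀ q ∈ Q, ∀ f ∈ F, q - f ∈ P)} with hS
    -- the initial cone D
    set D : Set X := {x | ∃ l : ℝ, 0 ≤ l ∧ ∃ f ∈ F, ∃ q ∈ Q, x = l • (q - f)} with hD
    have hDS : D ∈ S := by
      refine ⟨⟨0, le_refl _, f0, hf0, f0, hFsub hf0, by simp⟩, ?_, ?_, ?_, ?_⟩
      · rintro x ⟨l, hl, f, hf, q, hq, rfl⟩ y ⟨m, hm, f', hf', q', hq', rfl⟩
        rcases hl.eq_or_lt with h | hl'
        · exact ⟨m, hm, f', hf', q', hq', by rw [← h, zero_smul, zero_add]⟩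
        rcases hm.eq_or_lt with h | hm'
        · exact ⟨l, hl, f, hf, q, hq, by rw [← h, zero_smul, add_zero]⟩
        obtain ⟨ha0, ha1, hab⟩ := hcomb l m hl' hm'
        exact ⟨l + m, by positivity, (l/(l+m)) • f + (m/(l+m)) • f',
          hFc hf hf' (le_of_lt ha0) (by rw [← hab]; linarith) (by rw [← hab]; ring),
          (l/(l+m)) • q + (m/(l+m)) • q',
          hQ hq hq' (le_of_lt ha0) (by rw [← hab]; linarith) (by rw [← hab]; ring),
          comb_diff hl' hm' q f q' f'⟩
      · rintro l hl x ⟨m, hm, f, hf, q, hq, rfl⟩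
        exact ⟨l * m, by positivity, f, hf, q, hq, by rw [smul_smul]⟩
      · rintro x ⟨l, hl, f, hf, q, hq, rfl⟩ ⟨m, hm, f', hf', q', hq', hqF', heq⟩
        rcases hl.eq_or_lt with h | hl'
        · rw [← h, zero_smul] at heq
          have : f' - q' = 0 := by
            rcases smul_eq_zero.1 heq.symm with h' | h'
            · exact absurd h' (ne_of_gt hm)
            · exact h'
          exact hqF' (by rwa [sub_eq_zero.1 this] at hf')
        · -- l • (q - f) = m • (f' - q')  ⇒ contradiction with face
          obtain ⟨ha0, ha1, hab⟩ := hcomb l m hl' hm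
          have key : l • (q - f) + m • (q' - f') = 0 := by
            rw [heq]; module
          rw [comb_diff hl' hm q f q' f'] at key
          have hs : (l + m : ℝ) ≠ 0 := by positivity
          have key2 : ((l/(l+m)) • q + (m/(l+m)) • q') - ((l/(l+m)) • f + (m/(l+m)) • f') = 0 := by
            rcases smul_eq_zero.1 key with h' | h'
            · exact absurd h' hs
            · exact h'
          have hmemF : (l/(l+m)) • q + (m/(l+m)) • q' ∈ F := by
            rw [sub_eq_zero.1 key2]
            exact hFc hf hf' (le_of_lt ha0) (by rw [← hab]; linarith) (by rw [← hab]; ring)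
          rw [← hab] at hmemF
          exact hqF' (hface q q' hq hq' _ ha0 ha1 hmemF).2
      · intro q hq f hf
        exact ⟨1, zero_le_one, f, hf, q, hq, (one_smul ℝ _).symm⟩
    -- Zorn
    have hchain : ∀ c ⊆ S, IsChain (· ⊆ ·) c → c.Nonempty → ∃ ub ∈ S, ∀ s ∈ c, s ⊆ ub := by
      intro c hcS hchain ⟨P0, hP0⟩
      refine ⟨⋃₀ c, ⟨Set.mem_sUnion.2 ⟨P0, hP0, (hcS hP0).1⟩, ?_, ?_, ?_, ?_⟩,
        fun s hs => Set.subset_sUnion_of_mem hs⟩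
      · rintro a ⟨Pa, hPa, ha⟩ b ⟨Pb, hPb, hb⟩
        rcases hchain.total hPa hPb with h | h
        · exact ⟨Pb, hPb, (hcS hPb).2.1 a (h ha) b hb⟩
        · exact ⟨Pa, hPa, (hcS hPa).2.1 a ha b (h hb)⟩
      · rintro l hl a ⟨Pa, hPa, ha⟩
        exact ⟨Pa, hPa, (hcS hPa).2.2.1 l hl a ha⟩
      · rintro x ⟨Pa, hPa, ha⟩
        exact (hcS hPa).2.2.2.1 x ha
      · intro q hq f hf
        exact ⟨P0, hP0, (hcS hP0).2.2.2.2 q hq f hf⟩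
    obtain ⟨P, hDP, hPmax⟩ := zorn_subset_nonempty S hchain D hDS
    obtain ⟨hP0, hPadd, hPsmul, hPT, hPgen⟩ := hPmax.1
    -- key extension step
    have key : ∀ y : X, y ∉ P → ∃ p ∈ P, ∃ l : ℝ, 0 < l ∧ p + l • y ∈ T := by
      intro y hy
      set P1 : Set X := {w | ∃ p ∈ P, ∃ l : ℝ, 0 ≤ l ∧ w = p + l • y} with hP1
      by_cases hdisj : ∀ x ∈ P1, x ∉ T
      · exfalso
        have hP1S : P1 ∈ S := by
          refine ⟨⟨0, hP0, 0, le_refl _, by simp⟩, ?_, ?_, hdisj, ?_⟩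
          · rintro a ⟨p, hp, l, hl, rfl⟩ b ⟨p', hp', m, hm, rfl⟩
            exact ⟨p + p', hPadd p hp p' hp', l + m, by linarith, by
              rw [add_smul]; abel⟩
          · rintro m hm a ⟨p, hp, l, hl, rfl⟩
            exact ⟨m • p, hPsmul m hm p hp, m * l, by positivity, by
              rw [smul_add, smul_smul]⟩
          · intro q hq f hf
            exact ⟨q - f, hPgen q hq f hf, 0, le_refl _, by simp⟩
        have hsub : P ⊆ P1 := fun p hp => ⟨p, hp, 0, le_refl _, by simp⟩
        have : P1 ⊆ P := hPmax.2 hP1S hsub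
        exact hy (this ⟨0, hP0, 1, zero_le_one, by simp⟩)
      · push_neg at hdisj
        obtain ⟨w, ⟨p, hp, l, hl, rfl⟩, hwT⟩ := hdisj
        rcases hl.eq_or_lt with h | hl'
        · rw [← h, zero_smul, add_zero] at hwT
          exact absurd hwT (hPT p hp)
        · exact ⟨p, hp, l, hl', hwT⟩
    -- totality of P
    have htotal : ∀ x : X, x ∈ P ∨ -x ∈ P := by
      intro x
      by_contra hcon
      push_neg at hcon
      obtain ⟨p1, hp1, l1, hl1, ht1⟩ := key x hcon.1
      obtain ⟨p2, hp2, l2, hl2, ht2⟩ := key (-x) hcon.2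
      have hsum : l2 • (p1 + l1 • x) + l1 • (p2 + l2 • (-x)) = l2 • p1 + l1 • p2 := by
        module
      have hTmem : l2 • p1 + l1 • p2 ∈ T := by
        rw [← hsum]
        exact hT_add _ (hT_smul l2 hl2 _ ht1) _ (hT_smul l1 hl1 _ ht2)
      have hPmem : l2 • p1 + l1 • p2 ∈ P :=
        hPadd _ (hPsmul l2 hl2 _ hp1) _ (hPsmul l1 hl1 _ hp2)
      exact hPT _ hPmem hTmem
    -- the preorder
    refine ⟨fun x y => y - x ∈ P, ⟨?_, ?_, ?_, ?_, ?_⟩, ?_⟩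
    · intro x; rw [sub_self]; exact hP0
    · intro x y z hxy hyz
      have := hPadd _ hyz _ hxy
      rwa [sub_add_sub_cancel] at this
    · intro x y
      rcases htotal (y - x) with h | h
      · exact Or.inl h
      · exact Or.inr (by rwa [neg_sub] at h)
    · intro x y z h
      simpa [add_sub_add_right_eq_sub] using h
    · intro x y l hl h
      have := hPsmul l hl _ h
      rwa [smul_sub] at this
    · ext x
      constructor
      · intro hxF
        exact ⟨hFsub hxF, fun y hy => hPgen y hy x hxF⟩
      · rintro ⟨hxQ, hmin⟩
        by_contra hxF
        have hTm : f0 - x ∈ T := ⟨1, one_pos, f0, hf0, x, hxQ, hxF, (one_smul ℝ _).symm⟩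
        exact hPT _ (hmin f0 (hFsub hf0)) hTm
  · rintro ⟨r, ⟨hrefl, htrans, htot, hadd, hsmul⟩, rfl⟩
    refine ⟨⟨f0, hf0⟩, ?_, fun x hx => hx.1, ?_⟩
    · -- convexity
      rintro x ⟨hxQ, hxm⟩ y ⟨hyQ, hym⟩ a b ha hb hab
      refine ⟨hQ hxQ hyQ ha hb hab, fun z hz => ?_⟩
      rcases ha.eq_or_lt with h | ha'
      · have hb1 : b = 1 := by linarith
        rw [← h, hb1, zero_smul, one_smul, zero_add]
        exact hym z hz
      rcases hb.eq_or_lt with h | hb'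
      · have ha1 : a = 1 := by linarith
        rw [← h, ha1, zero_smul, one_smul, add_zero]
        exact hxm z hz
      have c2 : r (a • x + b • y) (a • z + b • y) := hadd _ _ (b • y) (hsmul _ _ a ha' (hxm z hz))
      have c4 : r (b • y + a • z) (b • z + a • z) := hadd _ _ (a • z) (hsmul _ _ b hb' (hym z hz))
      have e1 : a • z + b • y = b • y + a • z := add_comm _ _
      have e2 : b • z + a • z = z := by
        rw [← add_smul, add_comm b a, hab, one_smul]
      rw [e1] at c2
      rw [e2] at c4
      exact htrans _ _ _ c2 c4
    · -- face property
      intro u v hu hv α h0 h1 hw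
      rcases htot u v with huv | hvu
      · exact min_face_aux htrans hadd hsmul hu hv h0 h1 hw huv
      · have hw' : (1-α) • v + (1 - (1-α)) • u ∈ {x ∈ Q | ∀ y ∈ Q, r x y} := by
          have : (1-α) • v + (1 - (1-α)) • u = α • u + (1 - α) • v := by
            rw [sub_sub_cancel]; exact add_comm _ _
          rwa [this]
        obtain ⟨h1', h2'⟩ := min_face_aux htrans hadd hsmul hv hu
          (by linarith) (by linarith) hw' hvu
        exact ⟨h2', h1'⟩
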